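/- For all integers m ≥ 3, n ≥ 1 and k ≥ 1, γ_{[k]R}(C_m □ P_n) ≥ (k+1)·mn/5. -/

import Mathlib

open SimpleGraph Finset
open scoped Classical

/-- Closed neighborhood of a vertex. -/
def closedNbr {V : Type*} (G : SimpleGraph V) (v : V) : Set V :=
  insert v (G.neighborSet v)

/-- `S` is an efficient dominating set: every vertex lies in the closed
neighborhood of exactly one vertex of `S`. -/
def IsEffDomSet {V : Type*} (G : SimpleGraph V) (S : Set V) : Prop :=
  ∀ v : V, ∃! u, u ∈ S ∧ v ∈ closedNbr G u

/-- `S` is a dominating set. -/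
def IsDomSet {V : Type*} (G : SimpleGraph V) (S : Set V) : Prop :=
  ∀ v : V, v ∉ S → ∃ u ∈ S, G.Adj u v

/-- The domination number. -/
noncomputable def domNumber {V : Type*} (G : SimpleGraph V) [Fintype V] : ℕ :=
  sInf {n | ∃ S : Set V, IsDomSet G S ∧ S.ncard = n}

/-- `f` is a `[k]`-Roman dominating function on `G`. -/
noncomputable def IsKRDF {V : Type*} (G : SimpleGraph V) [Fintype V] (k : ℕ) (f : V → ℕ) : Prop :=
  (∀ v, f v ≤ k + 1) ∧
  ∀ v : V, f v < k →
    f v + ∑ u ∈ univ.filter (fun u => G.Adj v u), f u ≥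
      k + (univ.filter (fun u => G.Adj v u ∧ 0 < f u)).card

/-- The `[k]`-Roman domination number. -/
noncomputable def kRoman {V : Type*} (G : SimpleGraph V) [Fintype V] (k : ℕ) : ℕ :=
  sInf {w | ∃ f : V → ℕ, IsKRDF G k f ∧ ∑ v, f v = w}

/-- `S` is a packing: closed neighborhoods of vertices in `S` are pairwise disjoint. -/
def IsPacking {V : Type*} (G : SimpleGraph V) (S : Set V) : Prop :=
  S.Pairwise fun u v => Disjoint (closedNbr G u) (closedNbr G v)

/-- The packing number. -/
noncomputable def packingNumber {V : Type*} (G : SimpleGraph V) [Fintype V] : ℕ :=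
  sSup {n | ∃ S : Set V, IsPacking G S ∧ S.ncard = n}

private lemma arith_helper (k d q s : ℕ) (hk : 1 ≤ k) (h1 : q ≤ s) (h2 : s ≤ (k+1) * q)
    (h3 : k + d + q ≤ k * d + s) (h4 : 1 ≤ d + q) : 2*k + 2 + d ≤ 2*(k*d + s) := by
  rcases Nat.eq_zero_or_pos q with hq | hq
  · subst hq
    simp only [Nat.mul_zero, Nat.le_zero] at h2
    subst h2
    rcases Nat.lt_or_ge d 2 with hd | hd
    · interval_cases d <;> omega
    · obtain ⟨e, rfl⟩ : ∃ e, d = e + 2 := ⟨d - 2, by omega⟩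
      have hke : k * (e + 2) = k * e + 2 * k := by ring
      rw [hke] at h3 ⊢
      generalize k * e = P at h3 ⊢
      omega
  · rcases Nat.eq_zero_or_pos d with hd | hd
    · subst hd; omega
    · have hP : k * 1 ≤ k * d := Nat.mul_le_mul_left k hd
      rw [Nat.mul_one] at hP
      generalize k * d = P at hP h3 ⊢
      omega

lemma deg_bounds (m' n : ℕ) (v : Fin (m'+3) × Fin n) :
    2 ≤ (univ.filter (fun u => ((cycleGraph (m'+3)).boxProd (pathGraph n)).Adj v u)).card ∧
    (univ.filter (fun u => ((cycleGraph (m'+3)).boxProd (pathGraph n)).Adj v u)).card ≤ 4 := by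
  classical
  obtain ⟨a, b⟩ := v
  set G := (cycleGraph (m'+3)).boxProd (pathGraph n) with hG
  have hpair2 : ({a - 1, a + 1} : Finset (Fin (m'+3))).card = 2 := by
    rw [← cycleGraph_degree_two_le]
    exact cycleGraph_degree_three_le
  have hne : a - 1 ≠ a + 1 := by
    intro h
    rw [h] at hpair2
    simp at hpair2
  constructor
  · -- lower bound
    have hsub : ({(a - 1, b), (a + 1, b)} : Finset (Fin (m'+3) × Fin n)) ⊆
        univ.filter (fun u => G.Adj (a, b) u) := by
      intro u hu
      simp only [mem_insert, mem_singleton] at hu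
      simp only [mem_filter, mem_univ, true_and]
      rcases hu with rfl | rfl
      · rw [hG]
        refine boxProd_adj.mpr (Or.inl ⟨?_, rfl⟩)
        exact cycleGraph_adj.mpr (Or.inl (by rw [sub_sub_cancel]))
      · rw [hG]
        refine boxProd_adj.mpr (Or.inl ⟨?_, rfl⟩)
        exact cycleGraph_adj.mpr (Or.inr (by rw [add_sub_cancel_left]))
    have hcp : ({(a - 1, b), (a + 1, b)} : Finset (Fin (m'+3) × Fin n)).card = 2 :=
      Finset.card_pair (fun h => hne (congrArg Prod.fst h))
    calc 2 = _ := hcp.symm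
      _ ≤ _ := Finset.card_le_card hsub
  · -- upper bound
    set t1 : Finset (Fin (m'+3) × Fin n) :=
      univ.filter (fun u => u.1 = a ∧ u.2.val = b.val + 1) with ht1
    set t2 : Finset (Fin (m'+3) × Fin n) :=
      univ.filter (fun u => u.1 = a ∧ u.2.val + 1 = b.val) with ht2
    have hsub : univ.filter (fun u => G.Adj (a, b) u) ⊆
        insert (a - 1, b) (insert (a + 1, b) (t1 ∪ t2)) := by
      intro u hu
      simp only [mem_filter, mem_univ, true_and] at hu
      rw [hG] at hu
      rcases boxProd_adj.mp hu with ⟨hadj, heq⟩ | ⟨hadj, heq⟩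
      · rcases cycleGraph_adj.mp hadj with h | h
        · have : u.1 = a - 1 := by
            rw [← h, sub_sub_cancel]
          simp only [mem_insert]
          left
          exact Prod.ext this heq.symm
        · have : u.1 = a + 1 := by
            rw [← h]
            abel
          simp only [mem_insert]
          right; left
          exact Prod.ext this heq.symm
      · rcases pathGraph_adj.mp hadj with h | h
        · simp only [mem_insert, mem_union, ht1, mem_filter, mem_univ, true_and]
          right; right; left
          exact ⟨heq.symm, h.symm⟩
        · simp only [mem_insert, mem_union, ht2, mem_filter, mem_univ, true_and]
          right; right; right
          exact ⟨heq.symm, h⟩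
    have hc1 : t1.card ≤ 1 := by
      refine Finset.card_le_one.mpr (fun x hx y hy => ?_)
      simp only [ht1, mem_filter, mem_univ, true_and] at hx hy
      ext
      · rw [hx.1, hy.1]
      · rw [hx.2, hy.2]
    have hc2 : t2.card ≤ 1 := by
      refine Finset.card_le_one.mpr (fun x hx y hy => ?_)
      simp only [ht2, mem_filter, mem_univ, true_and] at hx hy
      ext
      · rw [hx.1, hy.1]
      · omega
    calc (univ.filter (fun u => G.Adj (a, b) u)).card
        ≤ (insert (a - 1, b) (insert (a + 1, b) (t1 ∪ t2))).card := Finset.card_le_card hsub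
      _ ≤ 1 + (insert (a + 1, b) (t1 ∪ t2)).card := by
          have := Finset.card_insert_le (a - 1, b) (insert (a + 1, b) (t1 ∪ t2))
          omega
      _ ≤ 1 + (1 + (t1 ∪ t2).card) := by
          have := Finset.card_insert_le (a + 1, b) (t1 ∪ t2)
          omega
      _ ≤ 1 + (1 + (t1.card + t2.card)) := by
          have := Finset.card_union_le t1 t2
          omega
      _ ≤ 4 := by omega

lemma key_bound {V : Type*} [Fintype V] (G : SimpleGraph V) (k : ℕ) (hk : 1 ≤ k)
    (f : V → ℕ) (hf : IsKRDF G k f)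
    (hmin : ∀ v, 2 ≤ (univ.filter (fun u => G.Adj v u)).card)
    (hmax : ∀ v, (univ.filter (fun u => G.Adj v u)).card ≤ 4) :
    (k + 1) * Fintype.card V ≤ 5 * ∑ v, f v := by
  classical
  set N : V → Finset V := fun v => univ.filter (fun u => G.Adj v u) with hN
  set c : V → ℕ := fun v => f v + ∑ u ∈ N v, f u with hc
  set A : V → Finset V := fun v => (N v).filter (fun u => 0 < f u) with hA
  set pD : V → Prop := fun v => f v = k ∧ c v ≤ k with hpD
  -- basic: constraint restated
  have hf2 : ∀ v, f v < k → k + (A v).card ≤ c v := by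
    intro v hv
    have := hf.2 v hv
    have hAv : A v = univ.filter (fun u => G.Adj v u ∧ 0 < f u) := by
      ext u; simp [hA, hN]
    rw [hAv]
    exact this
  have hcge : ∀ v, f v ≤ c v := fun v => Nat.le_add_right _ _
  have hApos : ∀ v, f v < k → 1 ≤ (A v).card := by
    intro v hv
    by_contra h
    push_neg at h
    interval_cases h' : (A v).card
    have hAe : A v = ∅ := card_eq_zero.mp h'
    have hzero : ∀ u ∈ N v, f u = 0 := by
      intro u hu
      by_contra hz
      have : u ∈ A v := by
        simp only [hA, mem_filter]
        exact ⟨hu, Nat.pos_of_ne_zero hz⟩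
      simp [hAe] at this
    have hcv : c v = f v := by
      simp only [hc]
      rw [Finset.sum_eq_zero hzero]
      omega
    have := hf2 v hv
    omega
  -- deficient vertices
  have hD1 : ∀ v, pD v → c v = k := by
    intro v ⟨h1, h2⟩
    have := hcge v
    omega
  have hD2 : ∀ v, pD v → ∀ u ∈ N v, f u = 0 := by
    intro v hv u hu
    have h1 := hD1 v hv
    have h2 : f v = k := hv.1
    have hsum : ∑ u ∈ N v, f u = 0 := by
      simp only [hc] at h1
      omega
    exact Finset.sum_eq_zero_iff.mp hsum u hu
  -- non-deficient, nonzero vertices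
  have hR : ∀ v, ¬ pD v → f v ≠ 0 → k + 1 ≤ c v := by
    intro v hv hz
    rcases lt_trichotomy (f v) k with h | h | h
    · have := hf2 v h
      have := hApos v h
      omega
    · simp only [hpD, h, true_and, not_le] at hv
      omega
    · have := hf.1 v
      have := hcge v
      omega
  -- zero vertices
  have hZ : ∀ u, f u = 0 → 2*(k+1) + ((N u).filter pD).card ≤ 2 * c u := by
    intro u hu
    set Du : Finset V := (N u).filter pD with hDu
    set An : Finset V := (A u).filter (fun v => ¬ pD v) with hAn
    set d : ℕ := Du.card with hd
    set q : ℕ := An.card with hq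
    set s : ℕ := ∑ v ∈ An, f v with hs
    have hDuA : (A u).filter pD = Du := by
      ext v
      simp only [hDu, hA, mem_filter, and_assoc]
      constructor
      · rintro ⟨h1, h2, h3⟩; exact ⟨h1, h3⟩
      · rintro ⟨h1, h3⟩; exact ⟨h1, by rw [h3.1]; omega, h3⟩
    have hcard : (A u).card = d + q := by
      rw [← card_filter_add_card_filter_not (s := A u) (p := pD), hDuA]
    have h1 : q ≤ s := by
      calc q = ∑ _v ∈ An, 1 := by simp [hq]
      _ ≤ s := Finset.sum_le_sum (fun v hv => by
            simp only [hAn, hA, mem_filter] at hv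
            omega)
    have h2 : s ≤ (k+1) * q := by
      calc s ≤ ∑ _v ∈ An, (k+1) := Finset.sum_le_sum (fun v _ => hf.1 v)
      _ = (k+1) * q := by rw [Finset.sum_const, hq]; ring
    have hce : c u = k * d + s := by
      have e1 : ∑ v ∈ N u, f v = ∑ v ∈ A u, f v := by
        refine (Finset.sum_subset (by rw [hA]; exact filter_subset _ _) ?_).symm
        intro x hx hnx
        simp only [hA, mem_filter, not_and, not_lt, Nat.le_zero] at hnx
        exact hnx hx
      have e2 : ∑ v ∈ A u, f v = k * d + s := by
        rw [← Finset.sum_filter_add_sum_filter_not (A u) pD f, hDuA, ← hAn, ← hs]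
        have : ∑ v ∈ Du, f v = k * d := by
          rw [Finset.sum_congr rfl (fun v hv => by
            simp only [hDu, mem_filter] at hv
            exact hv.2.1), Finset.sum_const, hd]
          ring
        rw [this]
      simp only [hc, hu, e1, e2, Nat.zero_add]
    have h3 : k + d + q ≤ k * d + s := by
      have := hf2 u (by omega)
      rw [hcard, hce] at this
      omega
    have h4 : 1 ≤ d + q := by
      have := hApos u (by omega)
      omega
    have h5 := arith_helper k d q s hk h1 h2 h3 h4
    rw [hce]
    linarith
  -- Step A: sum of closed neighborhood weights
  have hsum5 : ∑ v, c v ≤ 5 * ∑ v, f v := by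
    have e1 : ∑ v, c v = ∑ v, f v + ∑ v : V, ∑ u ∈ N v, f u := by
      simp only [hc]
      rw [Finset.sum_add_distrib]
    have e2 : ∑ v : V, ∑ u ∈ N v, f u = ∑ u : V, (N u).card * f u := by
      calc ∑ v : V, ∑ u ∈ N v, f u
          = ∑ v : V, ∑ u : V, (if G.Adj v u then f u else 0) := by
            refine Finset.sum_congr rfl (fun v _ => ?_)
            rw [hN, Finset.sum_filter]
        _ = ∑ u : V, ∑ v : V, (if G.Adj v u then f u else 0) := Finset.sum_comm
        _ = ∑ u : V, (N u).card * f u := by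
            refine Finset.sum_congr rfl (fun u _ => ?_)
            have hflt : univ.filter (fun v => G.Adj v u) = N u := by
              ext v
              simp [hN, G.adj_comm]
            rw [← Finset.sum_filter, hflt, Finset.sum_const, smul_eq_mul]
    have e3 : ∑ u : V, (N u).card * f u ≤ ∑ u : V, 4 * f u :=
      Finset.sum_le_sum (fun u _ => Nat.mul_le_mul_right _ (hmax u))
    have e4 : ∑ u : V, 4 * f u = 4 * ∑ u, f u := by rw [Finset.mul_sum]
    omega
  -- double counting of edges between deficient and zero vertices
  have hDC : 2 * (univ.filter pD).card ≤
      ∑ u ∈ univ.filter (fun v => f v = 0), ((N u).filter pD).card := by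
    set Z := univ.filter (fun v : V => f v = 0) with hZs
    set D := univ.filter pD with hDs
    have e1 : ∀ u : V, ((N u).filter pD).card = ∑ v ∈ D, (if G.Adj u v then 1 else 0) := by
      intro u
      rw [← Finset.card_filter]
      congr 1
      ext v
      simp only [hN, hDs, mem_filter, mem_univ, true_and]
      tauto
    have e2 : ∀ v ∈ D, (2 : ℕ) ≤ ∑ u ∈ Z, (if G.Adj u v then 1 else 0) := by
      intro v hv
      have hvD : pD v := by
        rw [hDs] at hv
        simpa using hv
      have hZf : Z.filter (fun u => G.Adj u v) = N v := by
        ext u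
        simp only [hZs, hN, mem_filter, mem_univ, true_and]
        constructor
        · rintro ⟨_, hadj⟩
          exact hadj.symm
        · intro hadj
          refine ⟨hD2 v hvD u ?_, hadj.symm⟩
          simp [hN, hadj]
      have : ∑ u ∈ Z, (if G.Adj u v then 1 else 0) = (Z.filter (fun u => G.Adj u v)).card := by
        rw [Finset.card_filter]
      rw [this, hZf]
      exact hmin v
    calc 2 * D.card = ∑ _v ∈ D, 2 := by rw [Finset.sum_const, smul_eq_mul]; ring
      _ ≤ ∑ v ∈ D, ∑ u ∈ Z, (if G.Adj u v then 1 else 0) := Finset.sum_le_sum e2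
      _ = ∑ u ∈ Z, ∑ v ∈ D, (if G.Adj u v then 1 else 0) := Finset.sum_comm
      _ = ∑ u ∈ Z, ((N u).filter pD).card := by
          exact Finset.sum_congr rfl (fun u _ => (e1 u).symm)
  -- assemble
  set D := univ.filter pD with hDs
  set Z := univ.filter (fun v : V => f v = 0) with hZs
  set Z' := (univ.filter (fun v => ¬ pD v)).filter (fun v : V => f v = 0) with hZ's
  set R := (univ.filter (fun v => ¬ pD v)).filter (fun v : V => ¬ f v = 0) with hRs
  have hZZ' : Z' = Z := by
    ext v
    simp only [hZ's, hZs, mem_filter, mem_univ, true_and, hpD]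
    constructor
    · rintro ⟨_, h⟩; exact h
    · intro h
      exact ⟨fun hcon => by omega, h⟩
  have split1 : ∑ v ∈ D, 2 * c v + ∑ v ∈ univ.filter (fun v => ¬ pD v), 2 * c v
      = ∑ v : V, 2 * c v := Finset.sum_filter_add_sum_filter_not univ pD _
  have split2 : ∑ v ∈ Z', 2 * c v + ∑ v ∈ R, 2 * c v
      = ∑ v ∈ univ.filter (fun v => ¬ pD v), 2 * c v :=
    Finset.sum_filter_add_sum_filter_not _ (fun v => f v = 0) _
  have bD : ∑ v ∈ D, 2 * c v = 2 * k * D.card := by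
    rw [Finset.sum_congr rfl (fun v hv => by
      have hvD : pD v := by rw [hDs] at hv; simpa using hv
      rw [hD1 v hvD] : ∀ v ∈ D, 2 * c v = 2 * k)]
    rw [Finset.sum_const, smul_eq_mul]
    ring
  have bZ : 2 * (k+1) * Z.card + 2 * D.card ≤ ∑ v ∈ Z, 2 * c v := by
    have b1 : ∑ v ∈ Z, (2*(k+1) + ((N v).filter pD).card) ≤ ∑ v ∈ Z, 2 * c v := by
      refine Finset.sum_le_sum (fun v hv => ?_)
      have hv0 : f v = 0 := by rw [hZs] at hv; simpa using hv
      exact hZ v hv0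
    have b2 : ∑ v ∈ Z, (2*(k+1) + ((N v).filter pD).card)
        = 2 * (k+1) * Z.card + ∑ v ∈ Z, ((N v).filter pD).card := by
      rw [Finset.sum_add_distrib, Finset.sum_const, smul_eq_mul]
      ring_nf
    have b3 := hDC
    omega
  have bR : 2 * (k+1) * R.card ≤ ∑ v ∈ R, 2 * c v := by
    have : ∑ v ∈ R, 2 * (k+1) ≤ ∑ v ∈ R, 2 * c v := by
      refine Finset.sum_le_sum (fun v hv => ?_)
      have hv' : ¬ pD v ∧ ¬ f v = 0 := by
        rw [hRs] at hv
        simp only [mem_filter, mem_univ, true_and] at hv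
        exact hv
      have := hR v hv'.1 hv'.2
      omega
    rw [Finset.sum_const, smul_eq_mul] at this
    calc 2 * (k+1) * R.card = R.card * (2 * (k+1)) := by ring
      _ ≤ _ := this
  have hcards : Fintype.card V = D.card + Z.card + R.card := by
    have c1 : D.card + (univ.filter (fun v => ¬ pD v)).card = Fintype.card V := by
      rw [Finset.card_filter_add_card_filter_not, Finset.card_univ]
    have c2 : Z'.card + R.card = (univ.filter (fun v => ¬ pD v)).card :=
      Finset.card_filter_add_card_filter_not _
    rw [hZZ'] at c2
    omega
  have total : 2 * ((k+1) * Fintype.card V) ≤ ∑ v : V, 2 * c v := by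
    rw [hcards]
    calc 2 * ((k+1) * (D.card + Z.card + R.card))
        = 2 * k * D.card + (2 * (k+1) * Z.card + 2 * D.card) + 2 * (k+1) * R.card := by ring
      _ ≤ ∑ v ∈ D, 2 * c v + ∑ v ∈ Z, 2 * c v + ∑ v ∈ R, 2 * c v := by
          have := bD
          omega
      _ = ∑ v : V, 2 * c v := by rw [← hZZ'] at *; omega
  have final : ∑ v : V, 2 * c v = 2 * ∑ v, c v := by rw [Finset.mul_sum]
  rw [final] at total
  have : 2 * ((k+1) * Fintype.card V) ≤ 2 * (5 * ∑ v, f v) := by omega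
  omega

theorem stmt10 (m n k : ℕ) (hm : 3 ≤ m) (hn : 1 ≤ n) (hk : 1 ≤ k) :
    (kRoman ((cycleGraph m).boxProd (pathGraph n)) k : ℚ) ≥ (k + 1) * m * n / 5 := by
  obtain ⟨m', rfl⟩ : ∃ m', m = m' + 3 := ⟨m - 3, by omega⟩
  set G := (cycleGraph (m' + 3)).boxProd (pathGraph n) with hG
  have hne : (∑ v : Fin (m' + 3) × Fin n, (k + 1)) ∈
      {w | ∃ f : Fin (m' + 3) × Fin n → ℕ, IsKRDF G k f ∧ ∑ v, f v = w} := by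
    refine ⟨fun _ => k + 1, ⟨fun v => le_refl _, fun v hv => absurd hv (by show ¬ (k + 1 < k); omega)⟩, rfl⟩
  have hmem := Nat.sInf_mem (Set.nonempty_of_mem hne)
  obtain ⟨f, hf, hsum⟩ := hmem
  have hnat : (k + 1) * Fintype.card (Fin (m' + 3) × Fin n) ≤ 5 * ∑ v, f v :=
    key_bound G k hk f hf (fun v => (deg_bounds m' n v).1) (fun v => (deg_bounds m' n v).2)
  rw [hsum] at hnat
  have hcard : Fintype.card (Fin (m' + 3) × Fin n) = (m' + 3) * n := by
    rw [Fintype.card_prod, Fintype.card_fin, Fintype.card_fin]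
  rw [hcard] at hnat
  rw [ge_iff_le, div_le_iff₀ (by norm_num : (0:ℚ) < 5)]
  have hq : ((k + 1) * ((m' + 3) * n) : ℚ) ≤ 5 * (kRoman G k : ℚ) := by
    exact_mod_cast Nat.cast_le.mpr hnat
  push_cast at hq ⊢
  nlinarith [hq]
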